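/- The information identity for the β-components of the generalized Heckman model holds conditionally on selection: ∫_{-∞}^{∞} { (ρ²/(1 − ρ²)) [ ζ(y) φ(ζ(y))/Φ(ζ(y)) + φ(ζ(y))²/Φ(ζ(y))² ] + 1 } f(y) dy = ∫_{-∞}^{∞} [ z(y) − (ρ/√(1 − ρ²)) φ(ζ(y))/Φ(ζ(y)) ]² f(y) dy, where f(y) = (1/(σ Φ(μ₂))) φ(z(y)) Φ(ζ(y)); that is, minus the conditional expectation of the second derivative of the log-likelihood with respect to β equals the conditional expectation of the squared β-score. -/

import Mathlib

open MeasureTheory Set Filter Topology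

/-- Standard normal density. -/
noncomputable def phi (t : ℝ) : ℝ := Real.exp (-(t ^ 2) / 2) / Real.sqrt (2 * Real.pi)

/-- Standard normal cumulative distribution function. -/
noncomputable def Phi (x : ℝ) : ℝ := ∫ t in Set.Iic x, phi t

lemma sqrt_two_pi_pos : 0 < Real.sqrt (2 * Real.pi) :=
  Real.sqrt_pos.2 (by positivity)

lemma one_le_sqrt_two_pi : 1 ≤ Real.sqrt (2 * Real.pi) := by
  rw [show (1:ℝ) = Real.sqrt 1 by simp]
  exact Real.sqrt_le_sqrt (by nlinarith [Real.pi_gt_three])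

lemma phi_pos (t : ℝ) : 0 < phi t := by
  unfold phi; positivity

lemma phi_nonneg (t : ℝ) : 0 ≤ phi t := (phi_pos t).le

lemma phi_le_one (t : ℝ) : phi t ≤ 1 := by
  unfold phi
  rw [div_le_one sqrt_two_pi_pos]
  calc Real.exp (-(t^2)/2) ≤ 1 := Real.exp_le_one_iff.2 (by nlinarith [sq_nonneg t])
    _ ≤ Real.sqrt (2 * Real.pi) := one_le_sqrt_two_pi

lemma continuous_phi : Continuous phi := by
  unfold phi
  exact (Real.continuous_exp.comp (by continuity)).div_const _

lemma integrable_phi : Integrable phi := by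
  have h : Integrable (fun t : ℝ => Real.exp (-(1/2) * t ^ 2)) := integrable_exp_neg_mul_sq (by norm_num)
  exact (h.div_const (Real.sqrt (2 * Real.pi))).congr (by
    filter_upwards with t
    unfold phi
    ring_nf)

lemma integral_phi : ∫ t, phi t = 1 := by
  unfold phi
  rw [MeasureTheory.integral_div]
  have : ∫ t : ℝ, Real.exp (-(t^2)/2) = ∫ t : ℝ, Real.exp (-(1/2) * t^2) := by
    congr 1; funext t; ring_nf
  rw [this, integral_gaussian]
  rw [show Real.pi / (1/2) = 2 * Real.pi by ring]
  exact div_self sqrt_two_pi_pos.ne'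

lemma Phi_pos (x : ℝ) : 0 < Phi x := by
  unfold Phi
  rw [setIntegral_pos_iff_support_of_nonneg_ae
    (Filter.Eventually.of_forall fun t => phi_nonneg t) integrable_phi.integrableOn]
  have : Function.support phi ∩ Iic x = Iic x := by
    ext t; simp [Function.support, (phi_pos t).ne']
  rw [this]
  simp

lemma Phi_le_one (x : ℝ) : Phi x ≤ 1 := by
  unfold Phi
  rw [← integral_phi]
  exact setIntegral_le_integral integrable_phi (Filter.Eventually.of_forall fun t => phi_nonneg t)

lemma hasDerivAt_phi (t : ℝ) : HasDerivAt phi (-t * phi t) t := by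
  have h1 : HasDerivAt (fun u : ℝ => -(u ^ 2) / 2) (-t) t := by
    have := ((hasDerivAt_pow 2 t).neg.div_const 2)
    simpa using this.congr_deriv (by ring)
  have h2 := (h1.exp).div_const (Real.sqrt (2 * Real.pi))
  refine h2.congr_deriv ?_
  unfold phi; ring

lemma hasDerivAt_Phi (x : ℝ) : HasDerivAt Phi (phi x) x := by
  have key : Phi = fun u => Phi 0 + ∫ t in (0:ℝ)..u, phi t := by
    funext u
    rw [← intervalIntegral.integral_Iic_sub_Iic integrable_phi.integrableOn integrable_phi.integrableOn]
    unfold Phi; ring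
  rw [key]
  refine HasDerivAt.const_add _ ?_
  exact intervalIntegral.integral_hasDerivAt_right
    (integrable_phi.intervalIntegrable)
    (continuous_phi.stronglyMeasurableAtFilter _ _)
    continuous_phi.continuousAt

lemma continuous_Phi : Continuous Phi :=
  continuous_iff_continuousAt.2 fun x => (hasDerivAt_Phi x).continuousAt

lemma Phi_mono : Monotone Phi := by
  intro a b hab
  exact setIntegral_mono_set integrable_phi.integrableOn
    (Filter.Eventually.of_forall fun t => phi_nonneg t)
    (HasSubset.Subset.eventuallyLE (Iic_subset_Iic.2 hab))

lemma Phi_lb {x : ℝ} (hx : x ≤ 0) : phi (x - 1) ≤ Phi x := by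
  have h1 : phi (x-1) * (volume (Ioc (x-1) x)).toReal ≤ ∫ t in Ioc (x-1) x, phi t := by
    apply setIntegral_ge_of_const_le_real measurableSet_Ioc (by simp)
    · intro t ht
      unfold phi
      apply (div_le_div_iff_of_pos_right sqrt_two_pi_pos).2
      apply Real.exp_le_exp.2
      have h1 := ht.1
      have h2 := ht.2
      nlinarith
    · exact integrable_phi.integrableOn
  have h2 : (volume (Ioc (x-1) x)).toReal = 1 := by
    rw [Real.volume_Ioc]
    norm_num
  rw [h2, mul_one] at h1
  refine le_trans h1 ?_
  apply setIntegral_mono_set integrable_phi.integrableOn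
    (Filter.Eventually.of_forall fun t => phi_nonneg t)
  exact HasSubset.Subset.eventuallyLE (fun t ht => le_trans ht.2 le_rfl)

lemma mills (x : ℝ) : phi x ^ 2 / Phi x ≤ Real.exp 1 := by
  rw [div_le_iff₀ (Phi_pos x)]
  rcases le_or_gt x 0 with hx | hx
  · calc phi x ^ 2 ≤ Real.exp 1 * phi (x - 1) := by
          unfold phi
          rw [div_pow, Real.sq_sqrt (by positivity : (0:ℝ) ≤ 2 * Real.pi)]
          rw [← Real.exp_nat_mul]
          have h2π : Real.sqrt (2 * Real.pi) ≤ 2 * Real.pi := by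
            nlinarith [one_le_sqrt_two_pi, Real.sq_sqrt (by positivity : (0:ℝ) ≤ 2 * Real.pi)]
          have hkey : Real.exp ((2:ℕ) * (-(x^2)/2)) ≤ Real.exp 1 * Real.exp (-((x-1)^2)/2) := by
            rw [← Real.exp_add]
            apply Real.exp_le_exp.2
            push_cast
            nlinarith [sq_nonneg (x+1)]
          calc Real.exp ((2:ℕ) * (-(x^2)/2)) / (2 * Real.pi)
              ≤ Real.exp ((2:ℕ) * (-(x^2)/2)) / Real.sqrt (2 * Real.pi) :=
                div_le_div_of_nonneg_left (by positivity) sqrt_two_pi_pos h2π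
            _ ≤ (Real.exp 1 * Real.exp (-((x-1)^2)/2)) / Real.sqrt (2 * Real.pi) :=
                (div_le_div_iff_of_pos_right sqrt_two_pi_pos).2 hkey
            _ = Real.exp 1 * (Real.exp (-((x-1)^2)/2) / Real.sqrt (2 * Real.pi)) := by ring
      _ ≤ Real.exp 1 * Phi x := by
          exact mul_le_mul_of_nonneg_left (Phi_lb hx) (Real.exp_nonneg 1)
  · have h1 : phi x ^ 2 ≤ 1 / Real.sqrt (2 * Real.pi) := by
      have hb : phi x ≤ 1 / Real.sqrt (2 * Real.pi) := by
        unfold phi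
        exact (div_le_div_iff_of_pos_right sqrt_two_pi_pos).2
          (Real.exp_le_one_iff.2 (by nlinarith [sq_nonneg x]))
      calc phi x ^ 2 = phi x * phi x := sq (phi x) ▸ sq (phi x) ▸ (pow_two (phi x))
        _ ≤ (1 / Real.sqrt (2 * Real.pi)) * 1 := by
            apply mul_le_mul hb (phi_le_one x) (phi_nonneg x) (by positivity)
        _ = 1 / Real.sqrt (2 * Real.pi) := mul_one _
    have h2 : 1 / Real.sqrt (2 * Real.pi) ≤ Real.exp 1 * phi (-1) := by
      unfold phi
      rw [show Real.exp 1 * (Real.exp (-((-1:ℝ)^2)/2) / Real.sqrt (2*Real.pi))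
          = Real.exp (1 + -((-1:ℝ)^2)/2) / Real.sqrt (2*Real.pi) by rw [Real.exp_add]; ring]
      apply (div_le_div_iff_of_pos_right sqrt_two_pi_pos).2
      rw [show (1 + -((-1:ℝ)^2)/2) = (1/2 : ℝ) by norm_num]
      exact Real.one_le_exp (by norm_num)
    have h3 : phi (-1) ≤ Phi x := le_trans (by simpa using Phi_lb (le_refl (0:ℝ))) (Phi_mono hx.le)
    calc phi x ^ 2 ≤ Real.exp 1 * phi (-1) := le_trans h1 h2
      _ ≤ Real.exp 1 * Phi x := mul_le_mul_of_nonneg_left h3 (Real.exp_nonneg 1)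

lemma abs_mul_phi_le_one (t : ℝ) : |t * phi t| ≤ 1 := by
  rw [abs_mul, abs_of_nonneg (phi_nonneg t)]
  unfold phi
  rw [show |t| * (Real.exp (-(t^2)/2) / Real.sqrt (2*Real.pi))
      = |t| * Real.exp (-(t^2)/2) / Real.sqrt (2*Real.pi) by ring]
  rw [div_le_one sqrt_two_pi_pos]
  have h1 : |t| ≤ Real.exp (t^2/2) := by
    nlinarith [Real.add_one_le_exp (t^2/2), sq_nonneg (|t| - 1), sq_abs t, abs_nonneg t]
  calc |t| * Real.exp (-(t^2)/2) ≤ Real.exp (t^2/2) * Real.exp (-(t^2)/2) := by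
        apply mul_le_mul_of_nonneg_right h1 (Real.exp_nonneg _)
    _ = 1 := by rw [← Real.exp_add, show t^2/2 + -(t^2)/2 = 0 by ring, Real.exp_zero]
    _ ≤ Real.sqrt (2 * Real.pi) := one_le_sqrt_two_pi

lemma abs_mul_phi_le (t : ℝ) : |t * phi t| ≤ 2 * Real.exp (-(t^2)/4) := by
  rw [abs_mul, abs_of_nonneg (phi_nonneg t)]
  unfold phi
  have hs : Real.exp (-(t^2)/2) / Real.sqrt (2 * Real.pi) ≤ Real.exp (-(t^2)/2) := by
    rw [div_le_iff₀ sqrt_two_pi_pos]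
    nlinarith [one_le_sqrt_two_pi, Real.exp_nonneg (-(t^2)/2)]
  have h1 : |t| ≤ 2 * Real.exp (t^2/4) := by
    nlinarith [Real.add_one_le_exp (t^2/4), sq_nonneg (|t| - 2), sq_abs t, abs_nonneg t,
      Real.exp_nonneg (t^2/4)]
  calc |t| * (Real.exp (-(t^2)/2) / Real.sqrt (2 * Real.pi))
      ≤ (2 * Real.exp (t^2/4)) * Real.exp (-(t^2)/2) := by
        apply mul_le_mul h1 hs (by positivity) (by positivity)
    _ = 2 * Real.exp (-(t^2)/4) := by rw [mul_assoc, ← Real.exp_add]; ring_nf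

lemma tendsto_sq_atTop_of {l : Filter ℝ} (h : Tendsto (fun t : ℝ => |t|) l atTop) :
    Tendsto (fun t : ℝ => t^2) l atTop := by
  have : (fun t : ℝ => t^2) = (fun u : ℝ => u^2) ∘ (fun t => |t|) := by
    funext t; simp [sq_abs]
  rw [this]
  exact (tendsto_pow_atTop (two_ne_zero)).comp h

lemma tendsto_phi {l : Filter ℝ} (h : Tendsto (fun t : ℝ => |t|) l atTop) :
    Tendsto phi l (𝓝 0) := by
  have h2 : Tendsto (fun t : ℝ => -(t^2)/2) l atBot := by
    apply Filter.Tendsto.atBot_div_const (by norm_num : (0:ℝ) < 2)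
    exact tendsto_neg_atTop_atBot.comp (tendsto_sq_atTop_of h)
  have := (Real.tendsto_exp_atBot).comp h2
  unfold phi
  simpa using this.div_const (Real.sqrt (2 * Real.pi))

lemma tendsto_mul_phi {l : Filter ℝ} (h : Tendsto (fun t : ℝ => |t|) l atTop) :
    Tendsto (fun t => t * phi t) l (𝓝 0) := by
  apply squeeze_zero_norm (fun t => abs_mul_phi_le t)
  have h2 : Tendsto (fun t : ℝ => -(t^2)/4) l atBot := by
    apply Filter.Tendsto.atBot_div_const (by norm_num : (0:ℝ) < 4)
    exact tendsto_neg_atTop_atBot.comp (tendsto_sq_atTop_of h)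
  have := ((Real.tendsto_exp_atBot).comp h2).const_mul (2:ℝ)
  simpa using this

lemma integrable_exp_quarter : Integrable (fun t : ℝ => Real.exp (-(t^2)/4)) := by
  have h := integrable_exp_neg_mul_sq (by norm_num : (0:ℝ) < 1/4)
  exact h.congr (Filter.Eventually.of_forall fun t => by ring_nf)

lemma integrable_abs_mul_phi : Integrable (fun t : ℝ => |t| * phi t) := by
  apply (integrable_exp_quarter.const_mul 2).mono'
    ((continuous_abs.mul continuous_phi).aestronglyMeasurable)
  filter_upwards with t
  have h := abs_mul_phi_le t
  rw [abs_mul] at h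
  simpa [Real.norm_eq_abs, abs_mul, abs_abs, abs_of_nonneg (phi_nonneg t)] using h

lemma sq_mul_phi_le (t : ℝ) : t^2 * phi t ≤ 4 * Real.exp (-(t^2)/4) := by
  have e1 := Real.add_one_le_exp (t^2/4)
  have e2 : phi t ≤ Real.exp (-(t^2)/2) := by
    unfold phi
    rw [div_le_iff₀ sqrt_two_pi_pos]
    nlinarith [one_le_sqrt_two_pi, Real.exp_nonneg (-(t^2)/2)]
  have e3 : Real.exp (t^2/4) * Real.exp (-(t^2)/2) = Real.exp (-(t^2)/4) := by
    rw [← Real.exp_add]; ring_nf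
  calc t^2 * phi t ≤ (4 * Real.exp (t^2/4)) * Real.exp (-(t^2)/2) := by
        apply mul_le_mul (by nlinarith) e2 (phi_nonneg t) (by positivity)
    _ = 4 * Real.exp (-(t^2)/4) := by rw [mul_assoc, e3]

lemma integrable_sq_mul_phi : Integrable (fun t : ℝ => t^2 * phi t) := by
  apply (integrable_exp_quarter.const_mul 4).mono'
    (((continuous_pow 2).mul continuous_phi).aestronglyMeasurable)
  filter_upwards with t
  rw [Real.norm_eq_abs, Pi.mul_apply, abs_of_nonneg (mul_nonneg (sq_nonneg t) (phi_nonneg t))]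
  exact sq_mul_phi_le t

lemma integrable_comp_affine {f : ℝ → ℝ} (hf : Integrable f) (m c : ℝ) (hc : c ≠ 0) :
    Integrable (fun y => f ((y - m)/c)) := by
  have h1 : Integrable (fun u => f (u * c⁻¹)) :=
    (MeasureTheory.integrable_comp_mul_right_iff f (inv_ne_zero hc)).2 hf
  have h2 : Integrable (fun y => f ((y - m) * c⁻¹)) := h1.comp_sub_right m
  simpa [div_eq_mul_inv] using h2

theorem GH_information_identity_beta (μ₁ μ₂ σ ρ : ℝ) (hσ : 0 < σ) (hρ₁ : -1 < ρ) (hρ₂ : ρ < 1)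
    (z ζ : ℝ → ℝ)
    (hz : ∀ y, z y = (y - μ₁) / σ)
    (hζ : ∀ y, ζ y = (μ₂ + ρ * z y) / Real.sqrt (1 - ρ ^ 2)) :
    (∫ y : ℝ, ((ρ ^ 2 / (1 - ρ ^ 2))
          * (ζ y * (phi (ζ y) / Phi (ζ y)) + phi (ζ y) ^ 2 / Phi (ζ y) ^ 2) + 1)
        * ((1 / (σ * Phi μ₂)) * phi (z y) * Phi (ζ y)))
      = ∫ y : ℝ, (z y - (ρ / Real.sqrt (1 - ρ ^ 2)) * (phi (ζ y) / Phi (ζ y))) ^ 2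
          * ((1 / (σ * Phi μ₂)) * phi (z y) * Phi (ζ y)) := by
  have hs2 : (0:ℝ) < 1 - ρ^2 := by nlinarith
  set s : ℝ := Real.sqrt (1 - ρ^2) with hs_def
  have hs : 0 < s := Real.sqrt_pos.2 hs2
  have hss : s^2 = 1 - ρ^2 := Real.sq_sqrt hs2.le
  have hzf : z = fun y => (y - μ₁)/σ := funext hz
  have hζf : ζ = fun y => (μ₂ + ρ * z y)/s := funext hζ
  -- derivatives
  have hzd : ∀ y, HasDerivAt z σ⁻¹ y := by
    intro y
    rw [hzf]
    simpa [one_div] using ((hasDerivAt_id y).sub_const μ₁).div_const σ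
  have hζd : ∀ y, HasDerivAt ζ (ρ/s * σ⁻¹) y := by
    intro y
    have h := (((hzd y).const_mul ρ).const_add μ₂).div_const s
    rw [hζf]
    refine h.congr_deriv ?_
    ring
  have hzc : Continuous z := continuous_iff_continuousAt.2 fun y => (hzd y).continuousAt
  have hζc : Continuous ζ := continuous_iff_continuousAt.2 fun y => (hζd y).continuousAt
  -- positivity facts
  have hPμ : (0:ℝ) < Phi μ₂ := Phi_pos μ₂
  have hPζ : ∀ y, (0:ℝ) < Phi (ζ y) := fun y => Phi_pos (ζ y)
  -- abbreviations
  set q : ℝ := ρ^2/(1-ρ^2) with hq_def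
  set a : ℝ := ρ/s with ha_def
  set c : ℝ := 1/(σ * Phi μ₂) with hc_def
  have hqa : q = a^2 := by rw [hq_def, ha_def, div_pow, hss]
  -- the five building blocks
  set T1 : ℝ → ℝ := fun y => ζ y * phi (ζ y) * phi (z y) with hT1
  set T2 : ℝ → ℝ := fun y => phi (ζ y)^2 / Phi (ζ y) * phi (z y) with hT2
  set T3 : ℝ → ℝ := fun y => phi (z y) * Phi (ζ y) with hT3
  set T4 : ℝ → ℝ := fun y => z y^2 * phi (z y) * Phi (ζ y) with hT4
  set T5 : ℝ → ℝ := fun y => z y * phi (z y) * phi (ζ y) with hT5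
  set L : ℝ → ℝ := fun y => c * (q * T1 y + q * T2 y + T3 y) with hL_def
  set R : ℝ → ℝ := fun y => c * (T4 y - 2*a * T5 y + q * T2 y) with hR_def
  -- integrable comparison functions
  have hIphi : Integrable (fun y => phi (z y)) := by
    rw [hzf]; exact integrable_comp_affine integrable_phi μ₁ σ hσ.ne'
  have hIabs : Integrable (fun y => |z y| * phi (z y)) := by
    rw [hzf]; exact integrable_comp_affine integrable_abs_mul_phi μ₁ σ hσ.ne'
  have hIsq : Integrable (fun y => z y^2 * phi (z y)) := by
    rw [hzf]; exact integrable_comp_affine integrable_sq_mul_phi μ₁ σ hσ.ne'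
  -- integrability of the blocks
  have hI1 : Integrable T1 := by
    apply hIphi.mono' (((hζc.mul (continuous_phi.comp hζc)).mul
      (continuous_phi.comp hzc)).aestronglyMeasurable)
    filter_upwards with y
    simp only [Pi.mul_apply, Function.comp_apply]
    rw [Real.norm_eq_abs, abs_mul]
    calc |ζ y * phi (ζ y)| * |phi (z y)| ≤ 1 * phi (z y) := by
          apply mul_le_mul (abs_mul_phi_le_one _) (le_of_eq (abs_of_nonneg (phi_nonneg _)))
            (abs_nonneg _) zero_le_one
      _ = phi (z y) := one_mul _
  have hI2 : Integrable T2 := by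
    apply (hIphi.const_mul (Real.exp 1)).mono'
    · exact ((((continuous_phi.comp hζc).pow 2).div (continuous_Phi.comp hζc)
        (fun y => (hPζ y).ne')).mul (continuous_phi.comp hzc)).aestronglyMeasurable
    filter_upwards with y
    rw [Real.norm_eq_abs,
      abs_of_nonneg (mul_nonneg (div_nonneg (sq_nonneg _) (hPζ y).le) (phi_nonneg _))]
    exact mul_le_mul_of_nonneg_right (mills _) (phi_nonneg _)
  have hI3 : Integrable T3 := by
    apply hIphi.mono' (((continuous_phi.comp hzc).mul (continuous_Phi.comp hζc)).aestronglyMeasurable)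
    filter_upwards with y
    simp only [Pi.mul_apply, Function.comp_apply]
    rw [Real.norm_eq_abs, abs_of_nonneg (mul_nonneg (phi_nonneg _) (hPζ y).le)]
    calc phi (z y) * Phi (ζ y) ≤ phi (z y) * 1 :=
          mul_le_mul_of_nonneg_left (Phi_le_one _) (phi_nonneg _)
      _ = phi (z y) := mul_one _
  have hI4 : Integrable T4 := by
    apply hIsq.mono' ((((hzc.pow 2).mul (continuous_phi.comp hzc)).mul
      (continuous_Phi.comp hζc)).aestronglyMeasurable)
    filter_upwards with y
    simp only [Pi.mul_apply, Pi.pow_apply, Function.comp_apply]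
    rw [Real.norm_eq_abs,
      abs_of_nonneg (mul_nonneg (mul_nonneg (sq_nonneg _) (phi_nonneg _)) (hPζ y).le)]
    calc z y^2 * phi (z y) * Phi (ζ y) ≤ z y^2 * phi (z y) * 1 :=
          mul_le_mul_of_nonneg_left (Phi_le_one _)
            (mul_nonneg (sq_nonneg _) (phi_nonneg _))
      _ = z y^2 * phi (z y) := mul_one _
  have hI5 : Integrable T5 := by
    apply hIabs.mono' (((hzc.mul (continuous_phi.comp hzc)).mul
      (continuous_phi.comp hζc)).aestronglyMeasurable)
    filter_upwards with y
    simp only [Pi.mul_apply, Function.comp_apply]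
    rw [Real.norm_eq_abs, abs_mul]
    calc |z y * phi (z y)| * |phi (ζ y)| ≤ |z y * phi (z y)| * 1 := by
          apply mul_le_mul_of_nonneg_left _ (abs_nonneg _)
          rw [abs_of_nonneg (phi_nonneg _)]
          exact phi_le_one _
      _ = |z y * phi (z y)| := mul_one _
      _ = |z y| * phi (z y) := by rw [abs_mul, abs_of_nonneg (phi_nonneg _)]
  have hL : Integrable L := (((hI1.const_mul q).add (hI2.const_mul q)).add hI3).const_mul c
  have hR : Integrable R := (((hI4.sub (hI5.const_mul (2*a))).add (hI2.const_mul q)).const_mul c).congr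
    (by
      filter_upwards with y
      simp only [hR_def, hT1, hT2, hT3, hT4, hT5, Pi.sub_apply, Pi.add_apply, Pi.neg_apply,
        Pi.mul_apply])
  -- identify the integrands with L and R
  have hLeq : (fun y : ℝ => ((ρ ^ 2 / (1 - ρ ^ 2))
          * (ζ y * (phi (ζ y) / Phi (ζ y)) + phi (ζ y) ^ 2 / Phi (ζ y) ^ 2) + 1)
        * ((1 / (σ * Phi μ₂)) * phi (z y) * Phi (ζ y))) = L := by
    funext y
    rw [hL_def, hT1, hT2, hT3, hc_def, hq_def]
    have hPy := (hPζ y).ne'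
    field_simp
  have hReq : (fun y : ℝ => (z y - (ρ / Real.sqrt (1 - ρ ^ 2)) * (phi (ζ y) / Phi (ζ y))) ^ 2
          * ((1 / (σ * Phi μ₂)) * phi (z y) * Phi (ζ y))) = R := by
    funext y
    rw [hR_def, hT2, hT4, hT5, hc_def, hqa, ha_def, ← hs_def]
    have hPy := (hPζ y).ne'
    field_simp
    ring
  rw [hLeq, hReq]
  -- the exact-derivative function
  set g : ℝ → ℝ := fun y => -(z y * phi (z y) * Phi (ζ y)) + a * (phi (ζ y) * phi (z y))
    with hg_def
  set g' : ℝ → ℝ := fun y => σ⁻¹ * (T4 y - T3 y - 2*a * T5 y - a^2 * T1 y) with hg'_def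
  have hgd : ∀ y, HasDerivAt g (g' y) y := by
    intro y
    have h1 : HasDerivAt (fun y => phi (z y)) (-(z y) * phi (z y) * σ⁻¹) y :=
      (hasDerivAt_phi (z y)).comp y (hzd y)
    have h2 : HasDerivAt (fun y => phi (ζ y)) (-(ζ y) * phi (ζ y) * (ρ/s * σ⁻¹)) y :=
      (hasDerivAt_phi (ζ y)).comp y (hζd y)
    have h3 : HasDerivAt (fun y => Phi (ζ y)) (phi (ζ y) * (ρ/s * σ⁻¹)) y :=
      (hasDerivAt_Phi (ζ y)).comp y (hζd y)
    have h4 := ((hzd y).mul h1).mul h3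
    have h5 := (h2.mul h1).const_mul a
    have h6 := h4.neg.add h5
    refine h6.congr_deriv ?_
    rw [hg'_def, hT1, hT3, hT4, hT5, ha_def]
    simp only [Pi.mul_apply]
    ring
  -- limits of g at ±∞
  have hztop : Filter.Tendsto z Filter.atTop Filter.atTop := by
    rw [hzf]
    apply Filter.Tendsto.atTop_div_const hσ
    simpa [sub_eq_add_neg] using Filter.tendsto_atTop_add_const_right Filter.atTop (-μ₁)
      Filter.tendsto_id
  have hzbot : Filter.Tendsto z Filter.atBot Filter.atBot := by
    rw [hzf]
    apply Filter.Tendsto.atBot_div_const hσ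
    simpa [sub_eq_add_neg] using Filter.tendsto_atBot_add_const_right Filter.atBot (-μ₁)
      Filter.tendsto_id
  have hgtend : ∀ l : Filter ℝ, Filter.Tendsto z l Filter.atTop ∨ Filter.Tendsto z l Filter.atBot →
      Filter.Tendsto g l (𝓝 0) := by
    intro l hl
    have habs : Filter.Tendsto (fun y => |z y|) l Filter.atTop := by
      rcases hl with h | h
      · exact tendsto_abs_atTop_atTop.comp h
      · exact tendsto_abs_atBot_atTop.comp h
    have hmul : Filter.Tendsto (fun y => z y * phi (z y)) l (𝓝 0) := by
      have := (tendsto_mul_phi (l := Filter.map z l) (by rwa [Filter.tendsto_map'_iff])).comp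
        (Filter.tendsto_map (f := z))
      simpa [Function.comp_def] using this
    have hphi : Filter.Tendsto (fun y => phi (z y)) l (𝓝 0) := by
      have := (tendsto_phi (l := Filter.map z l) (by rwa [Filter.tendsto_map'_iff])).comp
        (Filter.tendsto_map (f := z))
      simpa [Function.comp_def] using this
    have hA : Filter.Tendsto (fun y => -(z y * phi (z y) * Phi (ζ y))) l (𝓝 0) := by
      apply squeeze_zero_norm _ (by simpa using hmul.abs : Filter.Tendsto (fun y => |z y * phi (z y)|) l (𝓝 0))
      intro y
      rw [norm_neg, Real.norm_eq_abs, abs_mul]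
      calc |z y * phi (z y)| * |Phi (ζ y)| ≤ |z y * phi (z y)| * 1 := by
            apply mul_le_mul_of_nonneg_left _ (abs_nonneg _)
            rw [abs_of_nonneg (hPζ y).le]; exact Phi_le_one _
        _ = |z y * phi (z y)| := mul_one _
    have hB : Filter.Tendsto (fun y => a * (phi (ζ y) * phi (z y))) l (𝓝 0) := by
      apply squeeze_zero_norm _
        (by simpa using (hphi.const_mul |a|) : Filter.Tendsto (fun y => |a| * phi (z y)) l (𝓝 0))
      intro y
      rw [Real.norm_eq_abs, abs_mul, abs_mul]
      apply mul_le_mul_of_nonneg_left _ (abs_nonneg a)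
      calc |phi (ζ y)| * |phi (z y)| ≤ 1 * |phi (z y)| := by
            apply mul_le_mul_of_nonneg_right _ (abs_nonneg _)
            rw [abs_of_nonneg (phi_nonneg _)]; exact phi_le_one _
        _ = |phi (z y)| := one_mul _
        _ = phi (z y) := abs_of_nonneg (phi_nonneg _)
    simpa using hA.add hB
  have hgtop : Filter.Tendsto g Filter.atTop (𝓝 0) := hgtend _ (Or.inl hztop)
  have hgbot : Filter.Tendsto g Filter.atBot (𝓝 0) := hgtend _ (Or.inr hzbot)
  -- integrability of g'
  have hIg' : Integrable g' :=
    ((((hI4.sub hI3).sub (hI5.const_mul (2*a))).sub (hI1.const_mul (a^2))).const_mul σ⁻¹).congr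
      (by
        filter_upwards with y
        simp only [hg'_def, hT1, hT3, hT4, hT5, Pi.sub_apply, Pi.add_apply, Pi.neg_apply,
          Pi.mul_apply])
  -- ∫ g' = 0
  have hint_g' : ∫ y : ℝ, g' y = 0 := by
    rw [← intervalIntegral.integral_Iic_add_Ioi (b := (0:ℝ)) hIg'.integrableOn hIg'.integrableOn]
    rw [integral_Iic_of_hasDerivAt_of_tendsto' (fun x _ => hgd x) hIg'.integrableOn hgbot]
    rw [integral_Ioi_of_hasDerivAt_of_tendsto' (fun x _ => hgd x) hIg'.integrableOn hgtop]
    ring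
  -- conclude
  have hdiff : ∫ y : ℝ, (R y - L y) = 0 := by
    have heq : (fun y : ℝ => R y - L y) = fun y => (1/Phi μ₂) * g' y := by
      funext y
      rw [hR_def, hL_def, hg'_def, hc_def, hqa]
      field_simp
      ring
    rw [heq, MeasureTheory.integral_const_mul, hint_g', mul_zero]
  have := MeasureTheory.integral_sub hR hL
  rw [hdiff] at this
  linarith [this]
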